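/- Whitney forms on a generalized mesh satisfy the patch condition: if elements k and k' of a generalized mesh M* are adjacent through a facet F, then for every Whitney d-form ω ∈ Λ^d(M*), the traces (pullbacks along the inclusion) of ω^k and ω^{k'} to |F| coincide. -/

import Mathlib

/-- A generalized mesh: a type of elements, a realization function assigning to each element
a simplex (a finite set of vertices), and a neighbor function encoding the adjacency graph
between split facets (each split facet `(F, k)` has at most one neighbor). -/
structure GenMesh (V : Type*) (n : ℕ) where
  Elem : Type*
  real : Elem → Finset V
  nbr : Elem → Finset V → Option Elem

namespace GenMesh

variable {V : Type*} {n : ℕ}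

/-- The axioms of an `n`-dimensional generalized mesh: finitely many elements, each realized
as an `n`-simplex; the adjacency graph is symmetric, two adjacent split facets share the same
facet, belong to distinct elements, and each split facet has at most one neighbor. -/
def IsValid (M : GenMesh V n) : Prop :=
  Finite M.Elem ∧ (∀ k, (M.real k).card = n + 1) ∧
    ∀ k F k', M.nbr k F = some k' →
      k' ≠ k ∧ M.nbr k' F = some k ∧ F ⊆ M.real k ∧ F ⊆ M.real k' ∧ F.card = n

end GenMesh
/-- `k` and `k'` lie in the same connected component of the graph `G(S)` on the generalized
star of `S`: they are linked by a chain of elements, consecutive ones being adjacent through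
a facet containing `S`. -/
def inSameComp {V : Type*} {n : ℕ} (M : GenMesh V n) (S : Set V) (k k' : M.Elem) : Prop :=
  Relation.ReflTransGen
    (fun a b => ∃ G : Finset V, S ⊆ (G : Set V) ∧
      (M.nbr a G = some b ∨ M.nbr b G = some a)) k k'
open Classical in
/-- Evaluation of the Whitney `d`-form associated to the generalized `d`-subfacet with vertex
ordering `Vs` and component `γ`: on an element `k ∈ γ` it is the alternating sum
`∑_j (-1)^j λ_{V_j} dλ_{V_0} ∧ … ∧ d̂λ_{V_j} ∧ … ∧ dλ_{V_d}`, evaluated at the point `x` on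
the tuple of vectors `v`; on elements outside `γ` it vanishes. -/
noncomputable def whitneyEval {m n : ℕ} (M : GenMesh (Fin m → ℝ) n)
    (lam : M.Elem → (Fin m → ℝ) → ((Fin m → ℝ) →ᵃ[ℝ] ℝ)) {d : ℕ}
    (Vs : Fin (d + 1) → (Fin m → ℝ)) (γ : Set M.Elem) (k : M.Elem) (x : Fin m → ℝ)
    (v : Fin d → (Fin m → ℝ)) : ℝ :=
  if k ∈ γ then
    ∑ j : Fin (d + 1), (-1 : ℝ) ^ (j : ℕ) * lam k (Vs j) x *
      Matrix.det (Matrix.of fun a b : Fin d => (lam k (Vs (j.succAbove a))).linear (v b))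
  else 0

/-- The space `Λ^d(M)` of Whitney `d`-forms on a generalized mesh: the span of the Whitney
forms associated to the generalized `d`-subfacets of `M`. -/
noncomputable def whitneyForms {m n : ℕ} (M : GenMesh (Fin m → ℝ) n)
    (lam : M.Elem → (Fin m → ℝ) → ((Fin m → ℝ) →ᵃ[ℝ] ℝ)) (d : ℕ) :
    Submodule ℝ (M.Elem → (Fin m → ℝ) → (Fin d → (Fin m → ℝ)) → ℝ) :=
  Submodule.span ℝ
    {w | ∃ (Vs : Fin (d + 1) → (Fin m → ℝ)) (k₀ : M.Elem), Function.Injective Vs ∧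
      (∀ j, Vs j ∈ M.real k₀) ∧
      w = fun k x v => whitneyEval M lam Vs {kk | inSameComp M (Set.range Vs) k₀ kk} k x v}

open Classical in
/-- `lam k v` is the barycentric coordinate function of the simplex attached to `k`
associated with its vertex `v`. -/
def IsBary {m n : ℕ} (M : GenMesh (Fin m → ℝ) n)
    (lam : M.Elem → (Fin m → ℝ) → ((Fin m → ℝ) →ᵃ[ℝ] ℝ)) : Prop :=
  ∀ k, ∀ v ∈ M.real k, ∀ w ∈ M.real k, lam k v w = if v = w then (1 : ℝ) else 0

/-- Every element of the generalized mesh is realized as a non-degenerate simplex. -/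
def GoodSimplices {m n : ℕ} (M : GenMesh (Fin m → ℝ) n) : Prop :=
  ∀ k, AffineIndependent ℝ (fun v : {x // x ∈ M.real k} => (v : Fin m → ℝ))
/-- Two affine maps agreeing on a set agree on its convex hull. -/
lemma affine_eq_on_hull {m : ℕ} {f g : (Fin m → ℝ) →ᵃ[ℝ] ℝ} {s : Set (Fin m → ℝ)}
    (h : Set.EqOn f g s) {x : Fin m → ℝ} (hx : x ∈ convexHull ℝ s) : f x = g x := by
  refine affineSpan_induction (p := fun y => f y = g y) (convexHull_subset_affineSpan s hx) h ?_
  intro c u v w hu hv hw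
  simp only [AffineMap.map_vadd, map_smul, f.linearMap_vsub, g.linearMap_vsub, hu, hv, hw]

/-- Two affine maps agreeing on a set have linear parts agreeing on its vector span. -/
lemma linear_eq_on_vectorSpan {m : ℕ} {f g : (Fin m → ℝ) →ᵃ[ℝ] ℝ} {s : Set (Fin m → ℝ)}
    (h : Set.EqOn f g s) {v : Fin m → ℝ} (hv : v ∈ vectorSpan ℝ s) :
    f.linear v = g.linear v := by
  have hker : vectorSpan ℝ s ≤ LinearMap.ker (f.linear - g.linear) := by
    rw [vectorSpan_def, Submodule.span_le]
    rintro _ ⟨p, hp, q, hq, rfl⟩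
    simp only [SetLike.mem_coe, LinearMap.mem_ker, LinearMap.sub_apply]
    rw [f.linearMap_vsub, g.linearMap_vsub, h hp, h hq]
    simp
  have := hker hv
  simp only [LinearMap.mem_ker, LinearMap.sub_apply, sub_eq_zero] at this
  exact this

/-- Every element in the component of `S` contains `S`. -/
lemma inSameComp_subset_real {V : Type*} {n : ℕ} {M : GenMesh V n} (hM : M.IsValid)
    {S : Set V} {k₀ kk : M.Elem} (h : inSameComp M S k₀ kk)
    (h0 : S ⊆ (M.real k₀ : Set V)) : S ⊆ (M.real kk : Set V) := by
  induction h with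
  | refl => exact h0
  | tail hab hstep ih =>
    obtain ⟨G, hSG, hor⟩ := hstep
    rcases hor with h1 | h1
    · exact hSG.trans (Finset.coe_subset.mpr (hM.2.2 _ _ _ h1).2.2.2.1)
    · exact hSG.trans (Finset.coe_subset.mpr (hM.2.2 _ _ _ h1).2.2.1)

/-- patch condition. If elements `k` and `k'` of a generalized mesh `M`
(realized by non-degenerate simplices in `ℝ^m`, with barycentric coordinates `lam`) are
adjacent through a facet `F`, then for every Whitney `d`-form `ω ∈ Λ^d(M)`, the traces of
`ω^k` and `ω^{k'}` on `|F|` coincide: they agree at every point of `|F|` on every tuple of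
vectors tangent to `F`. -/
theorem stmt14 {m n : ℕ} (M : GenMesh (Fin m → ℝ) n) (hM : M.IsValid)
    (hgood : GoodSimplices M)
    (lam : M.Elem → (Fin m → ℝ) → ((Fin m → ℝ) →ᵃ[ℝ] ℝ)) (hlam : IsBary M lam)
    (d : ℕ) (k k' : M.Elem) (F : Finset (Fin m → ℝ)) (hadj : M.nbr k F = some k')
    (ω : M.Elem → (Fin m → ℝ) → (Fin d → (Fin m → ℝ)) → ℝ)
    (hω : ω ∈ whitneyForms M lam d) :
    ∀ x ∈ convexHull ℝ (F : Set (Fin m → ℝ)), ∀ v : Fin d → (Fin m → ℝ),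
      (∀ i, v i ∈ vectorSpan ℝ (F : Set (Fin m → ℝ))) → ω k x v = ω k' x v := by
  intro x hx v hv
  obtain ⟨hne, hadj', hFk, hFk', hFcard⟩ := hM.2.2 k F k' hadj
  induction hω using Submodule.span_induction with
  | zero => rfl
  | add a b _ _ ha hb => simp only [Pi.add_apply, ha, hb]
  | smul c a _ ha => simp only [Pi.smul_apply, smul_eq_mul, ha]
  | mem w hw =>
    obtain ⟨Vs, k₀, hinj, hVk₀, rfl⟩ := hw
    have hVk₀' : Set.range Vs ⊆ (M.real k₀ : Set (Fin m → ℝ)) := by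
      rintro _ ⟨j, rfl⟩; exact hVk₀ j
    -- an element of `real kk` not in `F` has vanishing barycentric coordinate on `F`
    have heqz : ∀ kk : M.Elem, F ⊆ M.real kk → ∀ u, u ∈ M.real kk → u ∉ F →
        Set.EqOn (lam kk u) (AffineMap.const ℝ (Fin m → ℝ) (0 : ℝ))
          (F : Set (Fin m → ℝ)) := by
      intro kk hkF u hu huF w hw
      have hw' : w ∈ F := hw
      rw [hlam kk u hu w (hkF hw'), AffineMap.const_apply]
      exact if_neg (fun h : u = w => huF (h ▸ hw'))
    -- vanishing lemma for an element of the component when some vertex misses `F`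
    have hvanish : ∀ kk : M.Elem, F ⊆ M.real kk →
        (∀ j, Vs j ∈ M.real kk) → (∃ j₀, Vs j₀ ∉ F) →
        whitneyEval M lam Vs {c | inSameComp M (Set.range Vs) k₀ c} kk x v = 0 := by
      intro kk hkF hVkk ⟨j₀, hj₀⟩
      unfold whitneyEval
      split
      · refine Finset.sum_eq_zero fun j _ => ?_
        have hez := heqz kk hkF (Vs j₀) (hVkk j₀) hj₀
        by_cases hj : j = j₀
        · subst hj
          rw [affine_eq_on_hull hez hx]
          simp
        · obtain ⟨a, ha⟩ := Fin.exists_succAbove_eq (Ne.symm hj)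
          rw [Matrix.det_eq_zero_of_row_eq_zero a fun b => by
            show (lam kk (Vs (j.succAbove a))).linear (v b) = 0
            rw [ha, linear_eq_on_vectorSpan hez (hv b)]
            simp]
          ring
      · rfl
    by_cases hk : inSameComp M (Set.range Vs) k₀ k <;>
      by_cases hk' : inSameComp M (Set.range Vs) k₀ k'
    · -- both in the component: termwise equality
      have hVk : Set.range Vs ⊆ (M.real k : Set (Fin m → ℝ)) :=
        inSameComp_subset_real hM hk hVk₀'
      have hVk' : Set.range Vs ⊆ (M.real k' : Set (Fin m → ℝ)) :=
        inSameComp_subset_real hM hk' hVk₀'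
      have heq : ∀ j, Set.EqOn (lam k (Vs j)) (lam k' (Vs j)) (F : Set (Fin m → ℝ)) := by
        intro j w hw
        have hw' : w ∈ F := hw
        rw [hlam k (Vs j) (hVk ⟨j, rfl⟩) w (hFk hw'),
          hlam k' (Vs j) (hVk' ⟨j, rfl⟩) w (hFk' hw')]
      show whitneyEval M lam Vs {kk | inSameComp M (Set.range Vs) k₀ kk} k x v =
        whitneyEval M lam Vs {kk | inSameComp M (Set.range Vs) k₀ kk} k' x v
      unfold whitneyEval
      rw [if_pos (show k ∈ {kk | inSameComp M (Set.range Vs) k₀ kk} from hk), if_pos (show k' ∈ {kk | inSameComp M (Set.range Vs) k₀ kk} from hk')]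
      refine Finset.sum_congr rfl fun j _ => ?_
      rw [affine_eq_on_hull (heq j) hx]
      congr 1
      congr 1
      ext a b
      exact linear_eq_on_vectorSpan (heq (j.succAbove a)) (hv b)
    · -- k in the component, k' not
      have hmiss : ∃ j₀, Vs j₀ ∉ F := by
        by_contra h
        push_neg at h
        exact hk' (hk.tail ⟨F, by rintro _ ⟨j, rfl⟩; exact Finset.mem_coe.mpr (h j),
          Or.inl hadj⟩)
      show whitneyEval M lam Vs {kk | inSameComp M (Set.range Vs) k₀ kk} k x v =
        whitneyEval M lam Vs {kk | inSameComp M (Set.range Vs) k₀ kk} k' x v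
      rw [hvanish k hFk (fun j => inSameComp_subset_real hM hk hVk₀' ⟨j, rfl⟩) hmiss]
      unfold whitneyEval
      rw [if_neg (show k' ∉ {kk | inSameComp M (Set.range Vs) k₀ kk} from hk')]
    · -- k' in the component, k not
      have hmiss : ∃ j₀, Vs j₀ ∉ F := by
        by_contra h
        push_neg at h
        exact hk (hk'.tail ⟨F, by rintro _ ⟨j, rfl⟩; exact Finset.mem_coe.mpr (h j),
          Or.inr hadj⟩)
      show whitneyEval M lam Vs {kk | inSameComp M (Set.range Vs) k₀ kk} k x v =
        whitneyEval M lam Vs {kk | inSameComp M (Set.range Vs) k₀ kk} k' x v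
      rw [hvanish k' hFk' (fun j => inSameComp_subset_real hM hk' hVk₀' ⟨j, rfl⟩) hmiss]
      unfold whitneyEval
      rw [if_neg (show k ∉ {kk | inSameComp M (Set.range Vs) k₀ kk} from hk)]
    · show whitneyEval M lam Vs {kk | inSameComp M (Set.range Vs) k₀ kk} k x v =
        whitneyEval M lam Vs {kk | inSameComp M (Set.range Vs) k₀ kk} k' x v
      unfold whitneyEval
      rw [if_neg (show k ∉ {kk | inSameComp M (Set.range Vs) k₀ kk} from hk), if_neg (show k' ∉ {kk | inSameComp M (Set.range Vs) k₀ kk} from hk')]
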